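/- Let r > 0 and let φ_n : B_r(0) → ℂ be a sequence of holomorphic functions converging uniformly on compact subsets of B_r(0) to a holomorphic function φ with φ'(0) ≠ 0. Then there exist 0 < κ₁ < r and κ₂ > 0 such that for all sufficiently large n, the restriction of φ_n to B_{κ₁}(0) is a biholomorphism onto its image and B_{κ₂}(φ(0)) ⊂ φ_n(B_{κ₁}(0)). In particular φ_n admits a holomorphic inverse on B_{κ₂}(φ(0)) for all large n. -/

import Mathlib

open Filter Topology Metric

theorem stmt2 (r : ℝ) (hr : 0 < r) (φn : ℕ → ℂ → ℂ) (φ : ℂ → ℂ)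
    (hφn : ∀ n, DifferentiableOn ℂ (φn n) (ball (0 : ℂ) r))
    (hφ : DifferentiableOn ℂ φ (ball (0 : ℂ) r))
    (hconv : ∀ K : Set ℂ, K ⊆ ball (0 : ℂ) r → IsCompact K →
      TendstoUniformlyOn (fun n => φn n) φ atTop K)
    (hderiv : deriv φ 0 ≠ 0) :
    ∃ κ₁ κ₂ : ℝ, 0 < κ₁ ∧ κ₁ < r ∧ 0 < κ₂ ∧
      ∀ᶠ n in atTop,
        Set.InjOn (φn n) (ball (0 : ℂ) κ₁) ∧
        ball (φ 0) κ₂ ⊆ φn n '' ball (0 : ℂ) κ₁ := by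
  set a : ℂ := deriv φ 0 with ha_def
  have ha : a ≠ 0 := hderiv
  have hapos : (0 : ℝ) < ‖a‖ := norm_pos_iff.2 ha
  -- the linear equivalence "multiplication by a"
  set A : ℂ ≃L[ℂ] ℂ := ContinuousLinearEquiv.unitsEquivAut ℂ (Units.mk0 a ha) with hA_def
  have hAapp : ∀ z : ℂ, A z = z * a := fun z => rfl
  have hAsymm : ‖(A.symm : ℂ →L[ℂ] ℂ)‖₊ = ‖a‖₊⁻¹ := by
    have : (A.symm : ℂ →L[ℂ] ℂ)
        = ContinuousLinearMap.smulRight (1 : ℂ →L[ℂ] ℂ) (a⁻¹) := rfl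
    rw [this, ContinuousLinearMap.nnnorm_smulRight_apply]
    simp [nnnorm_inv]
  -- continuity of deriv φ at 0
  have hdcont : ContinuousOn (deriv φ) (ball (0 : ℂ) r) :=
    ((hφ.analyticOnNhd isOpen_ball).deriv).continuousOn
  have hdca : ContinuousAt (deriv φ) 0 :=
    hdcont.continuousAt (isOpen_ball.mem_nhds (mem_ball_self hr))
  obtain ⟨δ, hδ0, hδ⟩ := Metric.continuousAt_iff.1 hdca (‖a‖ / 8) (by linarith)
  set ρ : ℝ := min (δ / 2) (r / 2) with hρ_def
  have hρ0 : 0 < ρ := lt_min (by linarith) (by linarith)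
  have hρδ : ρ < δ := (min_le_left _ _).trans_lt (by linarith)
  have hρr : ρ < r := (min_le_right _ _).trans_lt (by linarith)
  have hcbsub : closedBall (0 : ℂ) ρ ⊆ ball (0 : ℂ) r := by
    intro z hz
    simp only [mem_closedBall, mem_ball] at hz ⊢
    linarith
  have hd1 : ∀ z ∈ closedBall (0 : ℂ) ρ, ‖deriv φ z - a‖ ≤ ‖a‖ / 8 := by
    intro z hz
    have : dist z 0 < δ := (mem_closedBall.1 hz).trans_lt hρδ
    have := hδ this
    rw [dist_eq_norm] at this
    exact this.le
  -- convergence of derivatives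
  have hlu : TendstoLocallyUniformlyOn (fun n => φn n) φ atTop (ball (0 : ℂ) r) :=
    (tendstoLocallyUniformlyOn_iff_forall_isCompact isOpen_ball).2
      fun K hK hK' => hconv K hK hK'
  have hlu' : TendstoLocallyUniformlyOn (deriv ∘ fun n => φn n) (deriv φ) atTop
      (ball (0 : ℂ) r) := hlu.deriv (Eventually.of_forall hφn) isOpen_ball
  have hdu : TendstoUniformlyOn (deriv ∘ fun n => φn n) (deriv φ) atTop
      (closedBall (0 : ℂ) ρ) :=
    (tendstoLocallyUniformlyOn_iff_forall_isCompact isOpen_ball).1 hlu'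
      _ hcbsub (isCompact_closedBall _ _)
  have hev1 : ∀ᶠ n in atTop, ∀ z ∈ closedBall (0 : ℂ) ρ,
      dist (deriv φ z) (deriv (φn n) z) < ‖a‖ / 8 :=
    (Metric.tendstoUniformlyOn_iff.1 hdu) (‖a‖ / 8) (by linarith)
  -- convergence at 0
  have h00 : (0 : ℂ) ∈ ball (0 : ℂ) r := mem_ball_self hr
  have hconv0 := hconv {0} (by simpa using h00) isCompact_singleton
  set κ₂ : ℝ := ‖a‖ * ρ / 8 with hκ₂_def
  have hκ₂0 : 0 < κ₂ := by positivity
  have hev2 : ∀ᶠ n in atTop, dist (φ 0) (φn n 0) < κ₂ := by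
    filter_upwards [(Metric.tendstoUniformlyOn_iff.1 hconv0) κ₂ hκ₂0] with n hn
    exact hn 0 rfl
  refine ⟨ρ, κ₂, hρ0, hρr, hκ₂0, ?_⟩
  filter_upwards [hev1, hev2] with n hn1 hn2
  -- derivative bound for φn n
  have hd2 : ∀ z ∈ closedBall (0 : ℂ) ρ, ‖deriv (φn n) z - a‖ ≤ ‖a‖ / 4 := by
    intro z hz
    have h1 := hd1 z hz
    have h2 := hn1 z hz
    rw [dist_eq_norm] at h2
    calc ‖deriv (φn n) z - a‖ = ‖-(deriv φ z - deriv (φn n) z) + (deriv φ z - a)‖ := by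
          ring_nf
      _ ≤ ‖-(deriv φ z - deriv (φn n) z)‖ + ‖deriv φ z - a‖ := norm_add_le _ _
      _ ≤ ‖a‖ / 8 + ‖a‖ / 8 := by rw [norm_neg]; exact add_le_add h2.le h1
      _ = ‖a‖ / 4 := by ring
  -- ApproximatesLinearOn
  set c : NNReal := ‖a‖₊ / 4 with hc_def
  have hcR : (c : ℝ) = ‖a‖ / 4 := by
    simp [hc_def, NNReal.coe_div]
  have happrox : ApproximatesLinearOn (φn n) (A : ℂ →L[ℂ] ℂ) (closedBall (0 : ℂ) ρ) c := by
    intro x hx y hy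
    set g : ℂ → ℂ := fun z => φn n z - z * a with hg_def
    have hgd : ∀ z ∈ closedBall (0 : ℂ) ρ,
        HasFDerivWithinAt g
          ((ContinuousLinearMap.smulRight (1 : ℂ →L[ℂ] ℂ)
            (deriv (φn n) z - a)).restrictScalars ℝ) (closedBall (0 : ℂ) ρ) z := by
      intro z hz
      have hda : HasDerivAt (φn n) (deriv (φn n) z) z :=
        ((hφn n).differentiableAt (isOpen_ball.mem_nhds (hcbsub hz))).hasDerivAt
      have : HasDerivAt g (deriv (φn n) z - a) z := by
        have h := hda.sub ((hasDerivAt_id z).mul_const a)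
        rw [one_mul] at h
        exact h
      exact (this.hasFDerivAt.restrictScalars ℝ).hasFDerivWithinAt
    have hbound : ∀ z ∈ closedBall (0 : ℂ) ρ,
        ‖(ContinuousLinearMap.smulRight (1 : ℂ →L[ℂ] ℂ)
          (deriv (φn n) z - a)).restrictScalars ℝ‖ ≤ ‖a‖ / 4 := by
      intro z hz
      rw [ContinuousLinearMap.norm_restrictScalars,
        ContinuousLinearMap.norm_smulRight_apply, norm_one, one_mul]
      exact hd2 z hz
    have := (convex_closedBall (0 : ℂ) ρ).norm_image_sub_le_of_norm_hasFDerivWithin_le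
      hgd hbound hy hx
    have hxy : g x - g y = φn n x - φn n y - A (x - y) := by
      simp only [hg_def, hAapp]
      ring
    rw [hcR]
    calc ‖φn n x - φn n y - A (x - y)‖ = ‖g x - g y‖ := by rw [hxy]
      _ ≤ ‖a‖ / 4 * ‖x - y‖ := this
  have hclt : c < ‖(A.symm : ℂ →L[ℂ] ℂ)‖₊⁻¹ := by
    rw [hAsymm, inv_inv, ← NNReal.coe_lt_coe, hcR, coe_nnnorm]
    linarith
  -- injectivity
  have hinj : Set.InjOn (φn n) (closedBall (0 : ℂ) ρ) :=
    happrox.injOn (Or.inr hclt)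
  refine ⟨hinj.mono ball_subset_closedBall, ?_⟩
  -- surjectivity
  have hsub2 : closedBall (0 : ℂ) (ρ / 2) ⊆ closedBall (0 : ℂ) ρ :=
    closedBall_subset_closedBall (by linarith)
  have hsurj := happrox.surjOn_closedBall_of_nonlinearRightInverse
    A.toNonlinearRightInverse (by linarith : (0:ℝ) ≤ ρ / 2) hsub2
  have hnn : ((A.toNonlinearRightInverse.nnnorm : ℝ))⁻¹ = ‖a‖ := by
    have : A.toNonlinearRightInverse.nnnorm = ‖a‖₊⁻¹ := hAsymm
    rw [this]
    simp [coe_nnnorm]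
  rw [hnn] at hsurj
  have hrad : κ₂ * 2 ≤ ((‖a‖ : ℝ) - c) * (ρ / 2) := by
    rw [hcR, hκ₂_def]
    nlinarith [hapos, hρ0]
  intro y hy
  have hy' : y ∈ closedBall (φn n 0) ((‖a‖ - (c:ℝ)) * (ρ / 2)) := by
    rw [mem_closedBall]
    calc dist y (φn n 0) ≤ dist y (φ 0) + dist (φ 0) (φn n 0) := dist_triangle _ _ _
      _ ≤ κ₂ + κ₂ := add_le_add (mem_ball.1 hy).le hn2.le
      _ = κ₂ * 2 := by ring
      _ ≤ _ := hrad
  obtain ⟨x, hx, hfx⟩ := hsurj hy'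
  refine ⟨x, ?_, hfx⟩
  rw [mem_ball]
  calc dist x 0 ≤ ρ / 2 := mem_closedBall.1 hx
    _ < ρ := by linarith
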